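/- Every even additive code C ⊆ GF(4)ⁿ is self-orthogonal with respect to the trace inner product (C ⊆ C⊥); and every GF(4)-linear code C ⊆ GF(4)ⁿ that is self-orthogonal with respect to the trace inner product is even. -/
import Mathlib


noncomputable section

open Finset Polynomial

/-- The field `GF(4)` with four elements. -/
abbrev F4 := GaloisField 2 2

instance : Fintype F4 := Fintype.ofFinite F4

/-- The trace inner product `u∗v = Σⱼ (uⱼ v̄ⱼ + ūⱼ vⱼ)` on `GF(4)ⁿ`,
where conjugation is `x̄ = x²`.  It takes values in the prime subfield. -/
def trIP {n : ℕ} (u v : Fin n → F4) : F4 :=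
  ∑ j, (u j * (v j) ^ 2 + (u j) ^ 2 * v j)

/-- The Hamming weight of a vector in `GF(4)ⁿ`. -/
def wt {n : ℕ} (u : Fin n → F4) : ℕ := Set.ncard {j | u j ≠ 0}

/-- The dual of a code with respect to the trace inner product. -/
def trDual {n : ℕ} (C : Set (Fin n → F4)) : Set (Fin n → F4) :=
  {u | ∀ v ∈ C, trIP u v = 0}

lemma F4card : Fintype.card F4 = 4 := by
  have := GaloisField.card 2 2 (by norm_num)
  simpa using this

lemma F4two : (2 : F4) = 0 := by
  exact CharP.cast_eq_zero F4 2

lemma F4cube (x : F4) (hx : x ≠ 0) : x ^ 3 = 1 := by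
  have h := FiniteField.pow_card x
  rw [F4card] at h
  have h2 : x * x ^ 3 = x * 1 := by rw [mul_one]; linear_combination h
  exact mul_left_cancel₀ hx h2

open Classical in
lemma coord (x y : F4) :
    x * y ^ 2 + x ^ 2 * y =
      (if x + y = 0 then 0 else 1) + (if x = 0 then 0 else 1) +
        (if y = 0 then 0 else 1) := by
  by_cases hx : x = 0
  · subst hx
    by_cases hy : y = 0
    · simp [hy]
    · simp [hy]
      linear_combination -F4two
  · by_cases hy : y = 0
    · subst hy
      simp [hx]
      linear_combination -F4two
    · by_cases hxy : x + y = 0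
      · have hxy' : x = y := by
          have : x = -y := by linear_combination hxy
          rw [this]; linear_combination -y * F4two
        subst hxy'
        simp [hxy, hx]
        have hc := F4cube x hx
        linear_combination 2 * hc
      · simp [hx, hy, hxy]
        have h1 := F4cube x hx
        have h2 := F4cube y hy
        have h3 := F4cube (x + y) hxy
        linear_combination h3 - h1 - h2 + (-x * y ^ 2 - x ^ 2 * y - 2) * F4two

open Classical in
lemma wt_cast {n : ℕ} (u : Fin n → F4) :
    (wt u : F4) = ∑ j, if u j = 0 then 0 else 1 := by
  rw [wt, Set.ncard_eq_toFinset_card']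
  rw [Set.toFinset_setOf, Finset.card_filter]
  push_cast
  apply Finset.sum_congr rfl
  intro j _
  split_ifs <;> simp_all

lemma trIP_eq_wt {n : ℕ} (u v : Fin n → F4) :
    trIP u v = (wt (u + v) : F4) + (wt u : F4) + (wt v : F4) := by
  classical
  rw [trIP, wt_cast, wt_cast, wt_cast, ← Finset.sum_add_distrib, ← Finset.sum_add_distrib]
  apply Finset.sum_congr rfl
  intro j _
  have : (u + v) j = u j + v j := rfl
  rw [this]
  exact coord (u j) (v j)

lemma even_cast {m : ℕ} (h : Even m) : (m : F4) = 0 := by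
  obtain ⟨k, hk⟩ := h
  subst hk
  push_cast
  linear_combination (k : F4) * F4two

/-- An even additive code is self-orthogonal, and a self-orthogonal
GF(4)-linear code is even. -/
theorem even_additive_selforth_and_linear_selforth_even (n : ℕ) :
    (∀ C : AddSubgroup (Fin n → F4),
        (∀ u ∈ C, Even (wt u)) → ∀ u ∈ C, ∀ v ∈ C, trIP u v = 0) ∧
    (∀ C : Submodule F4 (Fin n → F4),
        (∀ u ∈ C, ∀ v ∈ C, trIP u v = 0) → ∀ u ∈ C, Even (wt u)) := by
  constructor
  · intro C hC u hu v hv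
    rw [trIP_eq_wt, even_cast (hC _ (C.add_mem hu hv)), even_cast (hC _ hu),
      even_cast (hC _ hv)]
    ring
  · intro C hC u hu
    classical
    -- find ω ∉ {0, 1}
    obtain ⟨ω, hω⟩ : ∃ x : F4, x ∉ ({0, 1} : Finset F4) := by
      by_contra h
      push_neg at h
      have hsub : (Finset.univ : Finset F4) ⊆ {0, 1} := fun x _ => h x
      have := Finset.card_le_card hsub
      rw [Finset.card_univ, F4card] at this
      have h2 : ({0, 1} : Finset F4).card ≤ 2 := Finset.card_insert_le _ _ |>.trans (by simp)
      omega
    simp only [Finset.mem_insert, Finset.mem_singleton, not_or] at hω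
    obtain ⟨hω0, hω1⟩ := hω
    have hωω : ω ^ 2 + ω = 1 := by
      have hc := F4cube ω hω0
      have hfac : (ω - 1) * (ω ^ 2 + ω + 1) = 0 := by linear_combination hc
      rcases mul_eq_zero.mp hfac with h | h
      · exact absurd (sub_eq_zero.mp h) hω1
      · linear_combination h - F4two
    have hmem : ω • u ∈ C := C.smul_mem ω hu
    have h := hC u hu (ω • u) hmem
    have hwt : (wt u : F4) = 0 := by
      rw [← h, trIP, wt_cast]
      apply Finset.sum_congr rfl
      intro j _
      have hsm : (ω • u) j = ω * u j := rfl
      rw [hsm]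
      by_cases hj : u j = 0
      · simp [hj]
      · simp only [hj, if_false]
        have hc := F4cube (u j) hj
        linear_combination -((ω ^ 2 + ω) * hc) - hωω
    rw [even_iff_two_dvd]
    exact (CharP.cast_eq_zero_iff F4 2 (wt u)).mp hwt
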